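/- Let Φ be a non-uniform random k-SAT formula on n variables with m clauses and maximum clause probability q_max with 2^k·q_max < 1. Then the probability that Φ is unsatisfiable is at least (1 − exp(−q_max·m))^{2^k} − q_max²·2^{2k}·m·(1 + exp(−q_max·m))^{2^k}. -/

import Mathlib

set_option maxHeartbeats 2000000


open Finset Filter Asymptotics

open scoped Classical

/-- The probability of drawing a given ordered k-clause (a tuple of `k` literals over
pairwise distinct variables); an unordered k-clause over a variable set `J` then has total
probability `(∏_{j∈J} pⱼ) / (2^k · ∑_{|J'|=k} ∏_{j∈J'} pⱼ)`. -/
noncomputable def clauseProbK (n k : ℕ) (p : ℕ → ℝ) (c : Fin k → Fin n × Bool) : ℝ :=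
  if Function.Injective fun i => (c i).1 then
    (∏ i, p ((c i).1 : ℕ)) /
      (2 ^ k * (Nat.factorial k) *
        ∑ J ∈ Finset.powersetCard k (Finset.range n), ∏ j ∈ J, p j)
  else 0

/-- The probability of drawing a given k-CNF formula: `m` clauses drawn independently. -/
noncomputable def formulaProbK (n m k : ℕ) (p : ℕ → ℝ)
    (Φ : Fin m → Fin k → Fin n × Bool) : ℝ :=
  ∏ j, clauseProbK n k p (Φ j)

/-- Satisfiability of a k-CNF formula: a literal `(x, b)` is satisfied by `a` iff `a x = b`. -/
def SatK {n m k : ℕ} (Φ : Fin m → Fin k → Fin n × Bool) : Prop :=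
  ∃ a : Fin n → Bool, ∀ j, ∃ i, a (Φ j i).1 = (Φ j i).2

/-- The probability that a non-uniform random k-SAT formula is unsatisfiable. -/
noncomputable def probUnsatK (n m k : ℕ) (p : ℕ → ℝ) : ℝ :=
  ∑ Φ : Fin m → Fin k → Fin n × Bool,
    if ¬ SatK Φ then formulaProbK n m k p Φ else 0

/-- The maximum clause probability: for a decreasingly sorted distribution `p` this is the
probability of a clause over the `k` most probable variables,
`q_max = (∏_{j<k} pⱼ) / (2^k · ∑_{|J'|=k} ∏_{j∈J'} pⱼ)`. -/
noncomputable def qmaxK (n k : ℕ) (p : ℕ → ℝ) : ℝ :=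
  (∏ j ∈ Finset.range k, p j) /
    (2 ^ k * ∑ J ∈ Finset.powersetCard k (Finset.range n), ∏ j ∈ J, p j)

/-- `p n` is a probability vector on `n` variables (indexed `0,…,n-1`), sorted decreasingly,
with all entries positive. -/
def ProbEnsemble (p : ℕ → ℕ → ℝ) : Prop :=
  ∀ n, 1 ≤ n →
    (∑ i ∈ Finset.range n, p n i = 1) ∧
    (∀ i j, i ≤ j → j < n → p n j ≤ p n i) ∧
    (∀ i, i < n → 0 < p n i)

lemma aux_pow_sub_pow (a b : ℝ) (h0 : 0 ≤ b) (hba : b ≤ a) (M : ℕ) :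
    a ^ (M + 1) - b ^ (M + 1) ≤ (M + 1 : ℝ) * (a - b) * a ^ M := by
  induction M with
  | zero => simp
  | succ M ih =>
    have hbm : b ^ (M + 1) ≤ a ^ (M + 1) := pow_le_pow_left₀ h0 hba _
    have ham : (0:ℝ) ≤ a ^ M := pow_nonneg (h0.trans hba) _
    have ha : 0 ≤ a := h0.trans hba
    calc a ^ (M + 2) - b ^ (M + 2)
        = a * (a ^ (M + 1) - b ^ (M + 1)) + (a - b) * b ^ (M + 1) := by ring
      _ ≤ a * ((M + 1 : ℝ) * (a - b) * a ^ M) + (a - b) * a ^ (M + 1) := by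
          have := mul_le_mul_of_nonneg_left ih ha
          nlinarith [mul_le_mul_of_nonneg_left hbm (sub_nonneg.2 hba)]
      _ ≤ ((M+1 : ℕ) + 1 : ℝ) * (a - b) * a ^ (M + 1) := by push_cast; ring_nf; nlinarith [mul_nonneg (sub_nonneg.2 hba) (mul_nonneg ha ham)]

lemma aux_one_sub_pow_upper (q : ℝ) (hq0 : 0 ≤ q) (hq1 : q ≤ 1) (s : ℕ) :
    (1 - q) ^ s ≤ 1 - s * q + s ^ 2 * q ^ 2 / 2 := by
  induction s with
  | zero => norm_num
  | succ s ih =>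
    have h1 : (0:ℝ) ≤ 1 - q := by linarith
    have h2 : (1 - q) ^ (s + 1) = (1 - q) * (1 - q) ^ s := by ring
    have h3 : (1 - q) * (1 - q) ^ s ≤ (1 - q) * (1 - s * q + s ^ 2 * q ^ 2 / 2) :=
      mul_le_mul_of_nonneg_left ih h1
    have hs0 : (0:ℝ) ≤ (s:ℝ) := Nat.cast_nonneg s
    push_cast
    nlinarith [mul_nonneg (mul_nonneg hs0 hs0) (mul_nonneg hq0 (mul_nonneg hq0 hq0)), sq_nonneg ((s:ℝ)*q)]

lemma aux_binom_neg (y : ℝ) (N : ℕ) :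
    ∑ s ∈ Finset.range (N + 1), (-1 : ℝ) ^ s * (N.choose s : ℝ) * y ^ s = (1 - y) ^ N := by
  have h := add_pow (-y) 1 N
  simp only [one_pow, mul_one] at h
  rw [show (1:ℝ) - y = -y + 1 by ring, h]
  refine Finset.sum_congr rfl fun s _ => ?_
  rw [neg_pow]
  ring

lemma aux_first_moment (N : ℕ) (hN : 1 ≤ N) (x : ℝ) :
    ∑ s ∈ Finset.range (N + 1), (N.choose s : ℝ) * s * x ^ s
      = N * x * (1 + x) ^ (N - 1) := by
  rw [Finset.sum_range_succ']
  simp only [Nat.cast_zero, mul_zero, pow_zero, zero_mul, add_zero]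
  have hb : (1 + x) ^ (N - 1) = ∑ i ∈ Finset.range (N - 1 + 1), (N - 1).choose i * x ^ i := by
    have h := add_pow x 1 (N - 1)
    simp only [one_pow, mul_one] at h
    rw [show (1:ℝ) + x = x + 1 by ring, h]
    refine Finset.sum_congr rfl fun s _ => ?_
    ring
  rw [show N - 1 + 1 = N from Nat.succ_pred_eq_of_pos hN] at hb
  rw [hb, Finset.mul_sum]
  refine Finset.sum_congr rfl fun i _ => ?_
  have hid : (N : ℝ) * ((N-1).choose i : ℝ) = (N.choose (i+1) : ℝ) * (i+1 : ℝ) := by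
    have h2 := Nat.add_one_mul_choose_eq (N - 1) i
    have h3 : N - 1 + 1 = N := Nat.succ_pred_eq_of_pos hN
    rw [h3] at h2
    exact_mod_cast congrArg (Nat.cast : ℕ → ℝ) h2
  push_cast
  rw [pow_succ]
  linear_combination (x ^ i * x) * hid.symm

lemma aux_analytic (N m : ℕ) (hN : 4 ≤ N) (hm : 1 ≤ m) (q : ℝ) (hq0 : 0 < q)
    (hqN : (N : ℝ) * q < 1) :
    (1 - Real.exp (-(q * m))) ^ N - q ^ 2 * (N : ℝ) ^ 2 * m * (1 + Real.exp (-(q * m))) ^ N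
      ≤ ∑ s ∈ Finset.range (N + 1), (-1 : ℝ) ^ s * (N.choose s : ℝ) * (1 - s * q) ^ m := by
  set x := Real.exp (-(q * m)) with hxdef
  have hN1 : (1:ℝ) ≤ N := by exact_mod_cast le_trans (by norm_num) hN
  have hq1 : q < 1 := lt_of_le_of_lt (le_mul_of_one_le_left hq0.le hN1) hqN
  have h1q : (0:ℝ) ≤ 1 - q := by linarith
  have hx0 : 0 < x := Real.exp_pos _
  have hx1 : x ≤ 1 := by
    rw [hxdef]
    apply Real.exp_le_one_iff.mpr
    simp only [neg_nonpos]
    positivity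
  set y := (1 - q) ^ m with hydef
  have hy0 : 0 ≤ y := pow_nonneg h1q m
  have hexpq : 1 - q ≤ Real.exp (-q) := by
    have := Real.add_one_le_exp (-q); linarith
  have hyx : y ≤ x := by
    rw [hydef, hxdef]
    calc (1 - q) ^ m ≤ Real.exp (-q) ^ m := pow_le_pow_left₀ h1q hexpq m
      _ = Real.exp (-(q * m)) := by
          rw [← Real.exp_nat_mul]; ring_nf
  have hy1 : y ≤ 1 := hyx.trans hx1
  -- per-s facts
  have key : ∀ s ∈ Finset.range (N + 1),
      (1 - s * q) ^ m ≤ y ^ s ∧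
      y ^ s - (1 - s * q) ^ m ≤ (3 / 2) * m * q ^ 2 * ((N:ℝ) * s) * x ^ s := by
    intro s hs
    rw [Finset.mem_range, Nat.lt_succ_iff] at hs
    have hsN : (s : ℝ) ≤ N := by exact_mod_cast hs
    have hb0 : (0:ℝ) ≤ 1 - s * q := by nlinarith [hq0.le]
    have hba : 1 - s * q ≤ (1 - q) ^ s := by
      have := one_add_mul_le_pow (show (-2:ℝ) ≤ -q by linarith) s
      calc 1 - s * q = 1 + s * (-q) := by ring
        _ ≤ (1 + -q) ^ s := this
        _ = (1 - q) ^ s := by ring_nf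
    have hys : y ^ s = ((1 - q) ^ s) ^ m := by
      rw [hydef, ← pow_mul, ← pow_mul, Nat.mul_comm]
    have hfy : (1 - s * q) ^ m ≤ y ^ s := by
      rw [hys]; exact pow_le_pow_left₀ hb0 hba m
    refine ⟨hfy, ?_⟩
    -- a^m - b^m ≤ m (a-b) a^{m-1}
    obtain ⟨M, rfl⟩ : ∃ M, m = M + 1 := ⟨m - 1, (Nat.succ_pred_eq_of_pos hm).symm⟩
    have hsub := aux_pow_sub_pow ((1-q)^s) (1 - s*q) hb0 hba M
    have hab : (1-q)^s - (1 - s*q) ≤ s^2 * q^2 / 2 := by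
      have := aux_one_sub_pow_upper q hq0.le hq1.le s
      linarith
    have haM : ((1-q)^s) ^ M ≤ 3 * x ^ s := by
      have h1 : ((1-q)^s) ^ M ≤ (Real.exp (-q) ^ s) ^ M := by
        apply pow_le_pow_left₀ (pow_nonneg h1q s)
        exact pow_le_pow_left₀ h1q hexpq s
      have h2 : (Real.exp (-q) ^ s) ^ M = Real.exp (-(q * s * M)) := by
        rw [← Real.exp_nat_mul, ← Real.exp_nat_mul]; ring_nf
      have h3 : Real.exp (-(q * s * M)) = x ^ s * Real.exp (q * s) := by
        rw [hxdef, ← Real.exp_nat_mul, ← Real.exp_add]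
        congr 1
        push_cast
        ring
      have h4 : Real.exp (q * s) ≤ 3 := by
        have hqs : q * s ≤ 1 := by nlinarith
        calc Real.exp (q * s) ≤ Real.exp 1 := Real.exp_le_exp.mpr hqs
          _ ≤ 3 := by have := Real.exp_one_lt_d9; linarith
      calc ((1-q)^s) ^ M ≤ Real.exp (-(q * s * M)) := by rw [← h2]; exact h1
        _ = x ^ s * Real.exp (q * s) := h3
        _ ≤ x ^ s * 3 := by
            apply mul_le_mul_of_nonneg_left h4 (pow_nonneg hx0.le s)
        _ = 3 * x ^ s := by ring
    have hs2 : (s:ℝ)^2 ≤ (N:ℝ) * s := by nlinarith [Nat.cast_nonneg (α := ℝ) s]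
    have hxs0 : (0:ℝ) ≤ x ^ s := pow_nonneg hx0.le s
    calc y ^ s - (1 - s * q) ^ (M+1)
        = ((1-q)^s) ^ (M+1) - (1 - s*q) ^ (M+1) := by rw [hys]
      _ ≤ (M + 1 : ℝ) * ((1-q)^s - (1 - s*q)) * ((1-q)^s) ^ M := hsub
      _ ≤ (M + 1 : ℝ) * (s^2 * q^2 / 2) * (3 * x ^ s) := by
          have hM1 : (0:ℝ) ≤ (M:ℝ) + 1 := by positivity
          have hd0 : (0:ℝ) ≤ (1-q)^s - (1 - s*q) := by linarith
          have hgoal := mul_le_mul (mul_le_mul_of_nonneg_left hab hM1) haM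
            (pow_nonneg (pow_nonneg h1q s) M) (by positivity)
          linarith
      _ ≤ (3 / 2) * (M+1 : ℕ) * q ^ 2 * ((N:ℝ) * s) * x ^ s := by
          push_cast
          nlinarith [mul_nonneg (mul_nonneg (show (0:ℝ) ≤ (M:ℝ)+1 by positivity) (sq_nonneg q)) hxs0,
            mul_le_mul_of_nonneg_left hs2 (mul_nonneg (mul_nonneg (show (0:ℝ) ≤ (M:ℝ)+1 by positivity) (sq_nonneg q)) hxs0)]
  -- main chain
  have hbin : ∑ s ∈ Finset.range (N + 1), (-1 : ℝ) ^ s * (N.choose s : ℝ) * y ^ s = (1 - y) ^ N :=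
    aux_binom_neg y N
  have step1 : (1 - x) ^ N ≤ (1 - y) ^ N := by
    apply pow_le_pow_left₀ (by linarith) (by linarith)
  have step2 : ∑ s ∈ Finset.range (N + 1), (-1 : ℝ) ^ s * (N.choose s : ℝ) * y ^ s
      - ∑ s ∈ Finset.range (N + 1), (N.choose s : ℝ) * ((3 / 2) * m * q ^ 2 * ((N:ℝ) * s) * x ^ s)
      ≤ ∑ s ∈ Finset.range (N + 1), (-1 : ℝ) ^ s * (N.choose s : ℝ) * (1 - s * q) ^ m := by
    rw [← Finset.sum_sub_distrib]
    apply Finset.sum_le_sum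
    intro s hs
    obtain ⟨h1, h2⟩ := key s hs
    have hC0 : (0:ℝ) ≤ (N.choose s : ℝ) := Nat.cast_nonneg _
    rcases Nat.even_or_odd s with he | ho
    · rw [he.neg_one_pow]
      nlinarith
    · rw [ho.neg_one_pow]
      nlinarith
  have step3 : ∑ s ∈ Finset.range (N + 1), (N.choose s : ℝ) * ((3 / 2) * m * q ^ 2 * ((N:ℝ) * s) * x ^ s)
      ≤ q ^ 2 * (N : ℝ) ^ 2 * m * (1 + x) ^ N := by
    have heq : ∑ s ∈ Finset.range (N + 1), (N.choose s : ℝ) * ((3 / 2) * m * q ^ 2 * ((N:ℝ) * s) * x ^ s)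
        = (3 / 2) * m * q ^ 2 * (N:ℝ) * ((N:ℝ) * x * (1 + x) ^ (N - 1)) := by
      rw [← aux_first_moment N (by omega) x, Finset.mul_sum]
      refine Finset.sum_congr rfl fun s _ => ?_
      ring
    rw [heq]
    have h1x : (0:ℝ) ≤ 1 + x := by linarith
    have hpow : (3 / 2) * x * (1 + x) ^ (N - 1) ≤ (1 + x) ^ N := by
      have : (3 / 2) * x ≤ 1 + x := by linarith
      calc (3 / 2) * x * (1 + x) ^ (N - 1) ≤ (1 + x) * (1 + x) ^ (N - 1) :=
            mul_le_mul_of_nonneg_right this (pow_nonneg h1x _)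
        _ = (1 + x) ^ (N - 1 + 1) := by rw [pow_succ]; ring
        _ = (1 + x) ^ N := by congr 1; omega
    calc (3 / 2) * m * q ^ 2 * (N:ℝ) * ((N:ℝ) * x * (1 + x) ^ (N - 1))
        = (q ^ 2 * (N:ℝ)^2 * m) * ((3/2) * x * (1 + x) ^ (N-1)) := by ring
      _ ≤ (q ^ 2 * (N:ℝ)^2 * m) * (1 + x) ^ N := by
          apply mul_le_mul_of_nonneg_left hpow (by positivity)
  linarith [hbin, step1, step2, step3]

lemma aux_card_inj_subtype (k : ℕ) (α : Type*) [Fintype α] [DecidableEq α] :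
    Fintype.card {f : Fin k → α // Function.Injective f}
      = (Fintype.card α).descFactorial k := by
  rw [Fintype.card_congr (Equiv.subtypeInjectiveEquivEmbedding (Fin k) α),
    Fintype.card_embedding_eq, Fintype.card_fin]

lemma aux_card_inj_into (n k : ℕ) (J : Finset (Fin n)) (hJ : J.card = k) :
    (Finset.univ.filter
        (fun f : Fin k → Fin n => Function.Injective f ∧ ∀ i, f i ∈ J)).card
      = Nat.factorial k := by
  rw [← Fintype.card_subtype]
  have e : {f : Fin k → Fin n // Function.Injective f ∧ ∀ i, f i ∈ J}
      ≃ {g : Fin k → ↥J // Function.Injective g} :=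
    { toFun := fun f => ⟨fun i => ⟨f.1 i, f.2.2 i⟩,
        fun a b hab => f.2.1 (congrArg Subtype.val hab)⟩
      invFun := fun g => ⟨fun i => (g.1 i : Fin n),
        ⟨fun a b hab => g.2 (Subtype.ext hab), fun i => (g.1 i).2⟩⟩
      left_inv := fun f => rfl
      right_inv := fun g => rfl }
  rw [Fintype.card_congr e, aux_card_inj_subtype, Fintype.card_coe, hJ,
    Nat.descFactorial_self]

lemma aux_card_inj_fin (k : ℕ) :
    (Finset.univ.filter (fun u : Fin k → Fin k => Function.Injective u)).card
      = Nat.factorial k := by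
  rw [← Fintype.card_subtype, aux_card_inj_subtype, Fintype.card_fin,
    Nat.descFactorial_self]

lemma aux_core_sum (n k : ℕ) (p : ℕ → ℝ) (J : Finset (Fin n)) (hJ : J.card = k) :
    ∑ f ∈ Finset.univ.filter
        (fun f : Fin k → Fin n => Function.Injective f ∧ ∀ i, f i ∈ J),
      ∏ i, p ((f i : ℕ))
      = (Nat.factorial k : ℝ) * ∏ j ∈ J, p (j : ℕ) := by
  have hterm : ∀ f ∈ Finset.univ.filter
      (fun f : Fin k → Fin n => Function.Injective f ∧ ∀ i, f i ∈ J),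
      ∏ i, p ((f i : ℕ)) = ∏ j ∈ J, p (j : ℕ) := by
    intro f hf
    rw [Finset.mem_filter] at hf
    obtain ⟨-, hinj, hmem⟩ := hf
    have himg : Finset.image f Finset.univ = J := by
      apply Finset.eq_of_subset_of_card_le
      · intro x hx
        rw [Finset.mem_image] at hx
        obtain ⟨i, -, rfl⟩ := hx
        exact hmem i
      · rw [Finset.card_image_of_injective _ hinj, Finset.card_univ, Fintype.card_fin, hJ]
    calc ∏ i, p ((f i : ℕ)) = ∏ j ∈ Finset.image f Finset.univ, p (j : ℕ) := by
          rw [Finset.prod_image (fun a _ b _ h => hinj h)]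
      _ = ∏ j ∈ J, p (j : ℕ) := by rw [himg]
  rw [Finset.sum_congr rfl hterm, Finset.sum_const, aux_card_inj_into n k J hJ,
    nsmul_eq_mul]

lemma aux_powerset_fin_nat (n k : ℕ) (p : ℕ → ℝ) :
    ∑ J ∈ Finset.powersetCard k (Finset.univ : Finset (Fin n)), ∏ j ∈ J, p (j : ℕ)
      = ∑ J ∈ Finset.powersetCard k (Finset.range n), ∏ j ∈ J, p j := by
  have h : Finset.range n = (Finset.univ : Finset (Fin n)).map Fin.valEmbedding := by
    rw [Fin.map_valEmbedding_univ, Nat.Iio_eq_range]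
  rw [h, Finset.powersetCard_map, Finset.sum_map]
  refine Finset.sum_congr rfl fun J _ => ?_
  rw [show (Finset.mapEmbedding Fin.valEmbedding).toEmbedding J = J.map Fin.valEmbedding from rfl,
    Finset.prod_map]
  rfl

lemma aux_total_sum (n k : ℕ) (p : ℕ → ℝ) :
    ∑ f ∈ Finset.univ.filter (fun f : Fin k → Fin n => Function.Injective f),
      ∏ i, p ((f i : ℕ))
      = (Nat.factorial k : ℝ) *
          ∑ J ∈ Finset.powersetCard k (Finset.range n), ∏ j ∈ J, p j := by
  rw [← aux_powerset_fin_nat n k p]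
  rw [← Finset.sum_fiberwise_of_maps_to
    (g := fun f : Fin k → Fin n => Finset.image f Finset.univ)
    (t := Finset.powersetCard k (Finset.univ : Finset (Fin n)))
    (fun f hf => by
      rw [Finset.mem_filter] at hf
      rw [Finset.mem_powersetCard]
      exact ⟨Finset.subset_univ _,
        by rw [Finset.card_image_of_injective _ hf.2, Finset.card_univ, Fintype.card_fin]⟩)]
  rw [Finset.mul_sum]
  refine Finset.sum_congr rfl fun J hJ => ?_
  rw [Finset.mem_powersetCard] at hJ
  have hfil : (Finset.univ.filter (fun f : Fin k → Fin n => Function.Injective f)).filter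
      (fun f => Finset.image f Finset.univ = J)
      = Finset.univ.filter
        (fun f : Fin k → Fin n => Function.Injective f ∧ ∀ i, f i ∈ J) := by
    ext f
    simp only [Finset.mem_filter, Finset.mem_univ, true_and]
    constructor
    · rintro ⟨hinj, himg⟩
      exact ⟨hinj, fun i => himg ▸ Finset.mem_image_of_mem f (Finset.mem_univ i)⟩
    · rintro ⟨hinj, hmem⟩
      refine ⟨hinj, Finset.eq_of_subset_of_card_le ?_ ?_⟩
      · intro x hx
        rw [Finset.mem_image] at hx
        obtain ⟨i, -, rfl⟩ := hx
        exact hmem i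
      · rw [Finset.card_image_of_injective _ hinj, Finset.card_univ, Fintype.card_fin, hJ.2]
  rw [hfil, aux_core_sum n k p J hJ.2]

/-- the set of (ordered) clauses over the first `k` variables with sign pattern `b`. -/
noncomputable def badSet (n k : ℕ) (hk : 0 < k) (b : Fin k → Bool) :
    Finset (Fin k → Fin n × Bool) :=
  Finset.univ.filter (fun c =>
    (Function.Injective fun i => (c i).1) ∧
    ∀ i, ((c i).1 : ℕ) < k ∧ (c i).2 = b ⟨((c i).1 : ℕ) % k, Nat.mod_lt _ hk⟩)

-- total probability is 1
lemma aux_clause_total (n k : ℕ) (p : ℕ → ℝ) (hkn : k ≤ n)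
    (hS : 0 < ∑ J ∈ Finset.powersetCard k (Finset.range n), ∏ j ∈ J, p j) :
    ∑ c : Fin k → Fin n × Bool, clauseProbK n k p c = 1 := by
  set S := ∑ J ∈ Finset.powersetCard k (Finset.range n), ∏ j ∈ J, p j with hSdef
  have he := Fintype.sum_equiv (Equiv.arrowProdEquivProdArrow (Fin k) (fun _ => Fin n) (fun _ => Bool)).symm
    (fun x : (Fin k → Fin n) × (Fin k → Bool) =>
      clauseProbK n k p ((Equiv.arrowProdEquivProdArrow (Fin k) (fun _ => Fin n) (fun _ => Bool)).symm x))
    (fun c => clauseProbK n k p c) (fun x => rfl)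
  rw [← he, Fintype.sum_prod_type]
  have hinner : ∀ f : Fin k → Fin n,
      ∑ b : Fin k → Bool, clauseProbK n k p
        ((Equiv.arrowProdEquivProdArrow (Fin k) (fun _ => Fin n) (fun _ => Bool)).symm (f, b))
      = (2:ℝ) ^ k * (if Function.Injective f then
          (∏ i, p ((f i : ℕ))) / (2 ^ k * (Nat.factorial k) * S) else 0) := by
    intro f
    have : ∀ b : Fin k → Bool, clauseProbK n k p
        ((Equiv.arrowProdEquivProdArrow (Fin k) (fun _ => Fin n) (fun _ => Bool)).symm (f, b))
        = (if Function.Injective f then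
            (∏ i, p ((f i : ℕ))) / (2 ^ k * (Nat.factorial k) * S) else 0) := by
      intro b; rfl
    rw [Finset.sum_congr rfl (fun b _ => this b), Finset.sum_const]
    rw [Finset.card_univ]
    have : Fintype.card (Fin k → Bool) = 2 ^ k := by
      rw [Fintype.card_fun, Fintype.card_bool, Fintype.card_fin]
    rw [this, nsmul_eq_mul]
    push_cast
    ring
  rw [Finset.sum_congr rfl (fun f _ => hinner f)]
  rw [← Finset.mul_sum, Finset.sum_ite, Finset.sum_const_zero, add_zero]
  rw [← Finset.sum_div, aux_total_sum n k p]
  have hfac : (0:ℝ) < (Nat.factorial k : ℝ) := by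
    exact_mod_cast Nat.factorial_pos k
  field_simp
  ring

lemma aux_badSet_prod (n k : ℕ) (hk : 0 < k) (hkn : k ≤ n) (b : Fin k → Bool)
    (p : ℕ → ℝ) (c : Fin k → Fin n × Bool) (hc : c ∈ badSet n k hk b) :
    ∏ i, p (((c i).1 : ℕ)) = ∏ j ∈ Finset.range k, p j := by
  rw [badSet, Finset.mem_filter] at hc
  obtain ⟨-, hinj, hprop⟩ := hc
  set u : Fin k → ℕ := fun i => ((c i).1 : ℕ) with hu
  have huinj : Function.Injective u := by
    intro a b' hab
    exact hinj (Fin.val_injective hab)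
  have himg : Finset.image u Finset.univ = Finset.range k := by
    apply Finset.eq_of_subset_of_card_le
    · intro x hx
      rw [Finset.mem_image] at hx
      obtain ⟨i, -, rfl⟩ := hx
      rw [Finset.mem_range]
      exact (hprop i).1
    · rw [Finset.card_image_of_injective _ huinj, Finset.card_univ, Fintype.card_fin,
        Finset.card_range]
  calc ∏ i, p (u i) = ∏ j ∈ Finset.image u Finset.univ, p j := by
        rw [Finset.prod_image (fun a _ b' _ h => huinj h)]
    _ = ∏ j ∈ Finset.range k, p j := by rw [himg]

lemma aux_badSet_card (n k : ℕ) (hk : 0 < k) (hkn : k ≤ n) (b : Fin k → Bool) :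
    (badSet n k hk b).card = Nat.factorial k := by
  rw [← aux_card_inj_fin k]
  refine Finset.card_bij'
    (fun c hc => fun t => (⟨((c t).1 : ℕ) % k, Nat.mod_lt _ hk⟩ : Fin k))
    (fun u hu => fun t => (Fin.castLE hkn (u t), b (u t))) ?hi ?hj ?li ?ri
  case hi =>
    intro c hc
    rw [badSet, Finset.mem_filter] at hc
    obtain ⟨-, hinj, hprop⟩ := hc
    rw [Finset.mem_filter]
    refine ⟨Finset.mem_univ _, ?_⟩
    intro a b' hab
    apply hinj
    have h1 : ((c a).1 : ℕ) % k = ((c b').1 : ℕ) % k := congrArg Fin.val hab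
    rw [Nat.mod_eq_of_lt (hprop a).1, Nat.mod_eq_of_lt (hprop b').1] at h1
    exact Fin.val_injective h1
  case hj =>
    intro u hu
    rw [Finset.mem_filter] at hu
    rw [badSet, Finset.mem_filter]
    refine ⟨Finset.mem_univ _, ?_, ?_⟩
    · intro a b' hab
      exact hu.2 (Fin.castLE_injective hkn hab)
    · intro i
      refine ⟨(u i).2, ?_⟩
      simp only
      congr 1
      apply Fin.ext
      simp [Nat.mod_eq_of_lt (u i).2]
  case li =>
    intro c hc
    rw [badSet, Finset.mem_filter] at hc
    obtain ⟨-, hinj, hprop⟩ := hc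
    funext t
    have h1 : (((c t).1 : ℕ)) % k = ((c t).1 : ℕ) := Nat.mod_eq_of_lt (hprop t).1
    apply Prod.ext
    · apply Fin.ext
      simp [h1]
    · simp only
      rw [(hprop t).2]
  case ri =>
    intro u hu
    funext t
    simp [Nat.mod_eq_of_lt (u t).2]

lemma aux_badSet_disjoint (n k : ℕ) (hk : 0 < k) (b b' : Fin k → Bool) (hbb : b ≠ b') :
    Disjoint (badSet n k hk b) (badSet n k hk b') := by
  rw [Finset.disjoint_left]
  intro c hc hc'
  apply hbb
  rw [badSet, Finset.mem_filter] at hc hc'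
  obtain ⟨-, hinj, hprop⟩ := hc
  obtain ⟨-, -, hprop'⟩ := hc'
  have hsurj : Function.Surjective
      (fun t => (⟨((c t).1 : ℕ) % k, Nat.mod_lt _ hk⟩ : Fin k)) := by
    apply Finite.surjective_of_injective
    intro a b'' hab
    apply hinj
    have h1 : ((c a).1 : ℕ) % k = ((c b'').1 : ℕ) % k := congrArg Fin.val hab
    rw [Nat.mod_eq_of_lt (hprop a).1, Nat.mod_eq_of_lt (hprop b'').1] at h1
    exact Fin.val_injective h1
  funext t
  obtain ⟨i, rfl⟩ := hsurj t
  rw [← (hprop i).2, (hprop' i).2]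

lemma aux_badSet_mass (n k : ℕ) (hk : 0 < k) (hkn : k ≤ n) (b : Fin k → Bool)
    (p : ℕ → ℝ)
    (hS : (∑ J ∈ Finset.powersetCard k (Finset.range n), ∏ j ∈ J, p j) ≠ 0) :
    ∑ c ∈ badSet n k hk b, clauseProbK n k p c = qmaxK n k p := by
  have hval : ∀ c ∈ badSet n k hk b, clauseProbK n k p c
      = (∏ j ∈ Finset.range k, p j) /
          (2 ^ k * (Nat.factorial k) *
            ∑ J ∈ Finset.powersetCard k (Finset.range n), ∏ j ∈ J, p j) := by
    intro c hc
    have hprod := aux_badSet_prod n k hk hkn b p c hc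
    rw [badSet, Finset.mem_filter] at hc
    rw [clauseProbK, if_pos hc.2.1, hprod]
  rw [Finset.sum_congr rfl hval, Finset.sum_const, aux_badSet_card n k hk hkn b,
    nsmul_eq_mul, qmaxK]
  have hfac : (0:ℝ) < (Nat.factorial k : ℝ) := by exact_mod_cast Nat.factorial_pos k
  rw [show (2:ℝ) ^ k * (Nat.factorial k : ℝ) *
      (∑ J ∈ Finset.powersetCard k (Finset.range n), ∏ j ∈ J, p j)
      = (Nat.factorial k : ℝ) * ((2:ℝ) ^ k *
        ∑ J ∈ Finset.powersetCard k (Finset.range n), ∏ j ∈ J, p j) from by ring]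
  field_simp

lemma aux_bad_unsat (n m k : ℕ) (hk : 0 < k) (hkn : k ≤ n)
    (Φ : Fin m → Fin k → Fin n × Bool)
    (h : ∀ b : Fin k → Bool, ∃ j, Φ j ∈ badSet n k hk b) :
    ¬ (∃ a : Fin n → Bool, ∀ j, ∃ i, a (Φ j i).1 = (Φ j i).2) := by
  rintro ⟨a, ha⟩
  set b : Fin k → Bool := fun i => ! a (Fin.castLE hkn i) with hb
  obtain ⟨j, hj⟩ := h b
  obtain ⟨i, hi⟩ := ha j
  rw [badSet, Finset.mem_filter] at hj
  obtain ⟨-, -, hprop⟩ := hj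
  have h1 := (hprop i).2
  have h2 : (Fin.castLE hkn (⟨((Φ j i).1 : ℕ) % k, Nat.mod_lt _ hk⟩ : Fin k))
      = (Φ j i).1 := by
    apply Fin.ext
    simp [Nat.mod_eq_of_lt (hprop i).1]
  rw [hb] at h1
  simp only at h1
  rw [h2] at h1
  rw [h1] at hi
  simp at hi

lemma aux_inclusion_exclusion (n m k : ℕ) (hk : 0 < k) (p : ℕ → ℝ)
    (htot : ∑ c : Fin k → Fin n × Bool, clauseProbK n k p c = 1)
    (hmass : ∀ b : Fin k → Bool,
      ∑ c ∈ badSet n k hk b, clauseProbK n k p c = qmaxK n k p)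
    (hdisj : ∀ b b' : Fin k → Bool, b ≠ b' →
      Disjoint (badSet n k hk b) (badSet n k hk b')) :
    ∑ Φ : Fin m → Fin k → Fin n × Bool,
      (if ∀ b : Fin k → Bool, ∃ j, Φ j ∈ badSet n k hk b then (1:ℝ) else 0) *
        ∏ j, clauseProbK n k p (Φ j)
    = ∑ s ∈ Finset.range (2 ^ k + 1),
        (-1:ℝ) ^ s * ((2 ^ k).choose s : ℝ) * (1 - s * qmaxK n k p) ^ m := by
  set w := clauseProbK n k p with hw
  set q := qmaxK n k p with hq
  set χ : (Fin k → Bool) → (Fin m → Fin k → Fin n × Bool) → ℝ :=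
    fun b Φ => if ∀ j, Φ j ∉ badSet n k hk b then 1 else 0 with hχ
  -- Step 1: rewrite the indicator as a product
  have step1 : ∀ Φ : Fin m → Fin k → Fin n × Bool,
      (if ∀ b : Fin k → Bool, ∃ j, Φ j ∈ badSet n k hk b then (1:ℝ) else 0)
      = ∏ b : Fin k → Bool, ((-1) * χ b Φ + 1) := by
    intro Φ
    have h1 : ∀ b : Fin k → Bool, (-1) * χ b Φ + 1
        = if ∃ j, Φ j ∈ badSet n k hk b then (1:ℝ) else 0 := by
      intro b
      rw [hχ]
      simp only
      by_cases h : ∀ j, Φ j ∉ badSet n k hk b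
      · rw [if_pos h, if_neg (by push_neg; exact h)]
        ring
      · rw [if_neg h, if_pos (by push_neg at h; exact h)]
        ring
    rw [Finset.prod_congr rfl (fun b _ => h1 b), Fintype.prod_boole]
  -- Step 2: expand the product
  have step2 : ∀ Φ : Fin m → Fin k → Fin n × Bool,
      ∏ b : Fin k → Bool, ((-1) * χ b Φ + 1)
      = ∑ t ∈ (Finset.univ : Finset (Fin k → Bool)).powerset,
          (-1:ℝ) ^ t.card * ∏ b ∈ t, χ b Φ := by
    intro Φ
    rw [Finset.prod_add]
    refine Finset.sum_congr rfl fun t _ => ?_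
    rw [Finset.prod_const_one, mul_one, Finset.prod_mul_distrib, Finset.prod_const]
  -- Step 3: the inner product is an indicator of avoiding the union
  have step3 : ∀ (t : Finset (Fin k → Bool)) (Φ : Fin m → Fin k → Fin n × Bool),
      ∏ b ∈ t, χ b Φ
      = if (∀ j, Φ j ∈ Finset.univ \ t.biUnion (badSet n k hk)) then (1:ℝ) else 0 := by
    intro t Φ
    rw [hχ]
    simp only
    rw [Finset.prod_boole]
    congr 1
    simp only [eq_iff_iff]
    constructor
    · intro h j
      rw [Finset.mem_sdiff]
      refine ⟨Finset.mem_univ _, ?_⟩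
      rw [Finset.mem_biUnion]
      rintro ⟨b, hb, hmem⟩
      exact h b hb j hmem
    · intro h b hb j hmem
      have := h j
      rw [Finset.mem_sdiff, Finset.mem_biUnion] at this
      exact this.2 ⟨b, hb, hmem⟩
  -- Step 4: sum over formulas avoiding a set
  have step4 : ∀ t : Finset (Fin k → Bool),
      ∑ Φ : Fin m → Fin k → Fin n × Bool,
        (if (∀ j, Φ j ∈ Finset.univ \ t.biUnion (badSet n k hk)) then (1:ℝ) else 0) *
          ∏ j, w (Φ j)
      = (1 - t.card * q) ^ m := by
    intro t
    have havoid : ∑ c ∈ Finset.univ \ t.biUnion (badSet n k hk), w c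
        = 1 - t.card * q := by
      rw [Finset.sum_sdiff_eq_sub (Finset.subset_univ _)]
      rw [show ∑ c ∈ Finset.univ, w c = 1 from htot]
      rw [Finset.sum_biUnion (fun b hb b' hb' hbb => hdisj b b' hbb)]
      rw [Finset.sum_congr rfl (fun b _ => hmass b), Finset.sum_const, nsmul_eq_mul]
    calc ∑ Φ : Fin m → Fin k → Fin n × Bool,
        (if (∀ j, Φ j ∈ Finset.univ \ t.biUnion (badSet n k hk)) then (1:ℝ) else 0) *
          ∏ j, w (Φ j)
        = ∑ Φ ∈ Finset.univ.filter
            (fun Φ : Fin m → Fin k → Fin n × Bool =>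
              ∀ j, Φ j ∈ Finset.univ \ t.biUnion (badSet n k hk)),
            ∏ j, w (Φ j) := by
          rw [Finset.sum_filter]
          refine Finset.sum_congr rfl fun Φ _ => ?_
          split <;> simp
      _ = ∑ Φ ∈ Fintype.piFinset
            (fun _ : Fin m => Finset.univ \ t.biUnion (badSet n k hk)),
            ∏ j, w (Φ j) := by
          apply Finset.sum_congr _ (fun Φ _ => rfl)
          ext Φ
          simp [Fintype.mem_piFinset]
      _ = ∏ _j : Fin m, ∑ c ∈ Finset.univ \ t.biUnion (badSet n k hk), w c :=
          (Finset.prod_univ_sum _ _).symm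
      _ = (1 - t.card * q) ^ m := by
          rw [Finset.prod_congr rfl (fun j _ => havoid), Finset.prod_const,
            Finset.card_univ, Fintype.card_fin]
  -- put everything together
  calc ∑ Φ : Fin m → Fin k → Fin n × Bool,
      (if ∀ b : Fin k → Bool, ∃ j, Φ j ∈ badSet n k hk b then (1:ℝ) else 0) *
        ∏ j, w (Φ j)
      = ∑ Φ : Fin m → Fin k → Fin n × Bool,
          ∑ t ∈ (Finset.univ : Finset (Fin k → Bool)).powerset,
            ((-1:ℝ) ^ t.card * ∏ b ∈ t, χ b Φ) * ∏ j, w (Φ j) := by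
        refine Finset.sum_congr rfl fun Φ _ => ?_
        rw [step1 Φ, step2 Φ, Finset.sum_mul]
    _ = ∑ t ∈ (Finset.univ : Finset (Fin k → Bool)).powerset,
          (-1:ℝ) ^ t.card *
            ∑ Φ : Fin m → Fin k → Fin n × Bool, (∏ b ∈ t, χ b Φ) * ∏ j, w (Φ j) := by
        rw [Finset.sum_comm]
        refine Finset.sum_congr rfl fun t _ => ?_
        rw [Finset.mul_sum]
        refine Finset.sum_congr rfl fun Φ _ => ?_
        ring
    _ = ∑ t ∈ (Finset.univ : Finset (Fin k → Bool)).powerset,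
          (-1:ℝ) ^ t.card * (1 - t.card * q) ^ m := by
        refine Finset.sum_congr rfl fun t _ => ?_
        congr 1
        rw [← step4 t]
        refine Finset.sum_congr rfl fun Φ _ => ?_
        rw [step3 t Φ]
    _ = ∑ s ∈ Finset.range (2 ^ k + 1),
          (-1:ℝ) ^ s * ((2 ^ k).choose s : ℝ) * (1 - s * q) ^ m := by
        rw [Finset.sum_powerset_apply_card
          (f := fun s : ℕ => (-1:ℝ) ^ s * (1 - s * q) ^ m)]
        rw [show (Finset.univ : Finset (Fin k → Bool)).card = 2 ^ k from by
          rw [Finset.card_univ, Fintype.card_fun, Fintype.card_bool, Fintype.card_fin]]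
        refine Finset.sum_congr rfl fun s _ => ?_
        rw [nsmul_eq_mul]
        push_cast
        ring
  rfl

/-- Lower bound on the probability that a non-uniform random k-SAT formula is unsatisfiable:
`Pr(Φ unsat) ≥ (1 - e^{-q_max·m})^{2^k} - q_max²·2^{2k}·m·(1 + e^{-q_max·m})^{2^k}`. -/
theorem nonuniform_kSAT_unsat_lower_bound
    (n m k : ℕ) (p : ℕ → ℝ) (hk : 2 ≤ k) (hkn : k ≤ n)
    (hsum : ∑ i ∈ Finset.range n, p i = 1)
    (hmono : ∀ i j, i ≤ j → j < n → p j ≤ p i)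
    (hpos : ∀ i, i < n → 0 < p i)
    (hq : 2 ^ k * qmaxK n k p < 1) :
    (1 - Real.exp (-(qmaxK n k p * m))) ^ (2 ^ k) -
        qmaxK n k p ^ 2 * (2 : ℝ) ^ (2 * k) * m *
          (1 + Real.exp (-(qmaxK n k p * m))) ^ (2 ^ k)
      ≤ probUnsatK n m k p := by
  classical
  set q := qmaxK n k p with hqdef
  have hk0 : 0 < k := by omega
  set S := ∑ J ∈ Finset.powersetCard k (Finset.range n), ∏ j ∈ J, p j with hSdef
  have hS : 0 < S := by
    rw [hSdef]
    apply Finset.sum_pos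
    · intro J hJ
      rw [Finset.mem_powersetCard] at hJ
      apply Finset.prod_pos
      intro j hj
      have := hJ.1 hj
      rw [Finset.mem_range] at this
      exact hpos j this
    · refine ⟨Finset.range k, ?_⟩
      rw [Finset.mem_powersetCard]
      exact ⟨Finset.range_subset_range.mpr hkn, Finset.card_range k⟩
  have hq0 : 0 < q := by
    rw [hqdef, qmaxK]
    apply div_pos
    · apply Finset.prod_pos
      intro j hj
      rw [Finset.mem_range] at hj
      exact hpos j (lt_of_lt_of_le hj hkn)
    · positivity
  have hw0 : ∀ c : Fin k → Fin n × Bool, 0 ≤ clauseProbK n k p c := by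
    intro c
    rw [clauseProbK]
    split
    · apply div_nonneg
      · apply Finset.prod_nonneg
        intro i _
        exact (hpos _ (Fin.is_lt _)).le
      · have hfac : (0:ℝ) < (Nat.factorial k : ℝ) := by exact_mod_cast Nat.factorial_pos k
        positivity
    · exact le_refl 0
  have hW0 : ∀ Φ : Fin m → Fin k → Fin n × Bool, 0 ≤ formulaProbK n m k p Φ := by
    intro Φ
    exact Finset.prod_nonneg fun j _ => hw0 (Φ j)
  rcases Nat.eq_zero_or_pos m with hm0 | hm
  · subst hm0
    have hP0 : probUnsatK n 0 k p = 0 := by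
      rw [probUnsatK]
      apply Finset.sum_eq_zero
      intro Φ _
      rw [if_neg]
      intro hns
      exact hns ⟨fun _ => true, fun j => absurd j.2 (by omega)⟩
    rw [hP0]
    have h1 : Real.exp (-(q * ((0:ℕ):ℝ))) = 1 := by norm_num
    rw [h1, sub_self, zero_pow (show 2 ^ k ≠ 0 by positivity)]
    norm_num
  · -- main case
    have htot : ∑ c : Fin k → Fin n × Bool, clauseProbK n k p c = 1 :=
      aux_clause_total n k p hkn hS
    have hmass : ∀ b : Fin k → Bool,
        ∑ c ∈ badSet n k hk0 b, clauseProbK n k p c = qmaxK n k p :=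
      fun b => aux_badSet_mass n k hk0 hkn b p (ne_of_gt hS)
    have hdisj : ∀ b b' : Fin k → Bool, b ≠ b' →
        Disjoint (badSet n k hk0 b) (badSet n k hk0 b') :=
      fun b b' => aux_badSet_disjoint n k hk0 b b'
    have hlow : ∑ Φ : Fin m → Fin k → Fin n × Bool,
        (if ∀ b : Fin k → Bool, ∃ j, Φ j ∈ badSet n k hk0 b then (1:ℝ) else 0) *
          ∏ j, clauseProbK n k p (Φ j)
        ≤ probUnsatK n m k p := by
      rw [probUnsatK]
      apply Finset.sum_le_sum
      intro Φ _
      by_cases hbad : ∀ b : Fin k → Bool, ∃ j, Φ j ∈ badSet n k hk0 b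
      · rw [if_pos hbad, one_mul, if_pos]
        · exact le_refl _
        · intro hsat
          exact aux_bad_unsat n m k hk0 hkn Φ hbad hsat
      · rw [if_neg hbad, zero_mul]
        split
        · exact hW0 Φ
        · exact le_refl 0
    have hIE := aux_inclusion_exclusion n m k hk0 p htot hmass hdisj
    have hqN : ((2 ^ k : ℕ) : ℝ) * q < 1 := by
      have : ((2:ℝ)) ^ k * q < 1 := hq
      push_cast
      exact this
    have hN4 : 4 ≤ 2 ^ k := by
      calc 4 = 2 ^ 2 := by norm_num
        _ ≤ 2 ^ k := Nat.pow_le_pow_right (by norm_num) hk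
    have hana := aux_analytic (2 ^ k) m hN4 hm q hq0 hqN
    have hcast : ((2 ^ k : ℕ) : ℝ) ^ 2 = (2:ℝ) ^ (2 * k) := by
      push_cast
      rw [← pow_mul, Nat.mul_comm]
    rw [hcast] at hana
    calc (1 - Real.exp (-(q * m))) ^ (2 ^ k) -
          q ^ 2 * (2:ℝ) ^ (2 * k) * m * (1 + Real.exp (-(q * m))) ^ (2 ^ k)
        ≤ ∑ s ∈ Finset.range (2 ^ k + 1),
            (-1:ℝ) ^ s * ((2 ^ k).choose s : ℝ) * (1 - s * q) ^ m := hana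
      _ = ∑ Φ : Fin m → Fin k → Fin n × Bool,
            (if ∀ b : Fin k → Bool, ∃ j, Φ j ∈ badSet n k hk0 b then (1:ℝ) else 0) *
              ∏ j, clauseProbK n k p (Φ j) := hIE.symm
      _ ≤ probUnsatK n m k p := hlow
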